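/- Every Lie derivation L of the incidence algebra I(X,R) of a finite preordered set X over a 2-torsion free commutative ring R with identity is proper: L = D + F where D is a derivation of I(X,R) and F is an R-linear map from I(X,R) into its center that vanishes on all commutators. -/

import Mathlib

open Finset

namespace LieDerIncidence

variable {R X : Type*} [CommRing R] [Preorder X]
    [Fintype X] [DecidableEq X] [LocallyFiniteOrder X]

/-- On a locally finite order with decidable equality, `≤` is decidable. -/
def decLE : DecidableRel ((· ≤ ·) : X → X → Prop) := fun a b =>
  decidable_of_iff (a ∈ Finset.Icc a b) (by simp [Finset.mem_Icc])

attribute [local instance] decLE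

/-- Matrix unit `E x y` of the incidence algebra (zero unless `x ≤ y`). -/
def E (x y : X) : IncidenceAlgebra R X :=
  ⟨fun a b => if a = x ∧ b = y ∧ x ≤ y then 1 else 0, fun a b h => by
    split_ifs with hc
    · exact absurd (hc.1 ▸ hc.2.1 ▸ hc.2.2) h
    · rfl⟩

lemma E_apply (x y a b : X) :
    (E x y : IncidenceAlgebra R X) a b = if a = x ∧ b = y ∧ x ≤ y then 1 else 0 := rfl

lemma E_eq_zero_of_not_le {x y : X} (h : ¬ x ≤ y) : (E x y : IncidenceAlgebra R X) = 0 := by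
  ext a b _
  simp [E_apply, h]

lemma mul_E_apply (f : IncidenceAlgebra R X) (x y a b : X) :
    (f * E x y : IncidenceAlgebra R X) a b = if b = y ∧ x ≤ y then f a x else 0 := by
  rw [IncidenceAlgebra.mul_apply]
  split_ifs with h
  · obtain ⟨rfl, hxy⟩ := h
    by_cases hx : x ∈ Icc a b
    · rw [Finset.sum_eq_single_of_mem x hx]
      · simp [E_apply, hxy]
      · intro c _ hc
        simp [E_apply, hc]
    · have hax : ¬ a ≤ x := by
        intro hax
        exact hx (Finset.mem_Icc.2 ⟨hax, hxy⟩)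
      rw [IncidenceAlgebra.apply_eq_zero_of_not_le hax]
      exact Finset.sum_eq_zero fun c hc => by
        rcases eq_or_ne c x with rfl | hcx
        · exact absurd hc hx
        · simp [E_apply, hcx]
  · exact Finset.sum_eq_zero fun c _ => by
      rcases eq_or_ne c x with rfl | hcx
      · simp only [E_apply]
        rw [if_neg, mul_zero]
        rintro ⟨-, rfl, hxy⟩
        exact h ⟨rfl, hxy⟩
      · simp [E_apply, hcx]

lemma E_mul_apply (f : IncidenceAlgebra R X) (x y a b : X) :
    (E x y * f : IncidenceAlgebra R X) a b = if a = x ∧ x ≤ y then f y b else 0 := by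
  rw [IncidenceAlgebra.mul_apply]
  split_ifs with h
  · obtain ⟨rfl, hxy⟩ := h
    by_cases hy : y ∈ Icc a b
    · rw [Finset.sum_eq_single_of_mem y hy]
      · simp [E_apply, hxy]
      · intro c _ hc
        simp [E_apply, hc]
    · have hyb : ¬ y ≤ b := by
        intro hyb
        exact hy (Finset.mem_Icc.2 ⟨hxy, hyb⟩)
      rw [IncidenceAlgebra.apply_eq_zero_of_not_le hyb]
      exact Finset.sum_eq_zero fun c hc => by
        rcases eq_or_ne c y with rfl | hcy
        · exact absurd hc hy
        · simp [E_apply, hcy]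
  · exact Finset.sum_eq_zero fun c _ => by
      rcases eq_or_ne c y with rfl | hcy
      · simp only [E_apply]
        rw [if_neg, zero_mul]
        rintro ⟨rfl, -, hxy⟩
        exact h ⟨rfl, hxy⟩
      · simp [E_apply, hcy]

lemma E_mul_E_of_ne {y u : X} (h : y ≠ u) (x v : X) :
    (E x y : IncidenceAlgebra R X) * E u v = 0 := by
  ext a b _
  rw [E_mul_apply]
  simp [E_apply, h]

lemma E_mul_E_of_le {x y v : X} (hxy : x ≤ y) (hyv : y ≤ v) :
    (E x y : IncidenceAlgebra R X) * E y v = E x v := by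
  ext a b _
  rw [E_mul_apply, E_apply]
  by_cases hax : a = x
  · subst hax
    simp [E_apply, hxy, hyv, hxy.trans hyv]
  · simp [E_apply, hax]

lemma sum_apply {ι : Type*} (s : Finset ι) (f : ι → IncidenceAlgebra R X) (a b : X) :
    (∑ i ∈ s, f i) a b = ∑ i ∈ s, f i a b := by
  induction s using Finset.cons_induction with
  | empty => rfl
  | cons i s hi ih => rw [Finset.sum_cons, Finset.sum_cons, IncidenceAlgebra.add_apply, ih]

lemma decomp (f : IncidenceAlgebra R X) :
    f = ∑ x : X, ∑ y : X, f x y • E x y := by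
  ext a b hab
  rw [sum_apply]
  rw [Finset.sum_eq_single_of_mem a (Finset.mem_univ a)]
  · rw [sum_apply, Finset.sum_eq_single_of_mem b (Finset.mem_univ b)]
    · simp [IncidenceAlgebra.constSMul_apply, E_apply, hab]
    · intro c _ hc
      simp [IncidenceAlgebra.constSMul_apply, E_apply, hc.symm]
  · intro c _ hc
    rw [sum_apply]
    exact Finset.sum_eq_zero fun d _ => by
      simp [IncidenceAlgebra.constSMul_apply, E_apply, hc.symm]


lemma mul_constSMul (c : R) (f g : IncidenceAlgebra R X) : f * (c • g) = c • (f * g) := by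
  ext a b _
  rw [IncidenceAlgebra.mul_apply, IncidenceAlgebra.constSMul_apply, IncidenceAlgebra.mul_apply,
    Finset.smul_sum]
  exact Finset.sum_congr rfl fun c hc => by
    rw [IncidenceAlgebra.constSMul_apply, smul_eq_mul, smul_eq_mul]; ring

lemma constSMul_mul (c : R) (f g : IncidenceAlgebra R X) : (c • f) * g = c • (f * g) := by
  ext a b _
  rw [IncidenceAlgebra.mul_apply, IncidenceAlgebra.constSMul_apply, IncidenceAlgebra.mul_apply,
    Finset.smul_sum]
  exact Finset.sum_congr rfl fun c hc => by
    rw [IncidenceAlgebra.constSMul_apply, smul_eq_mul, smul_eq_mul]; ring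

lemma congr_entry {f g : IncidenceAlgebra R X} (h : f = g) (a b : X) : f a b = g a b := by rw [h]

section WithL
variable (L : IncidenceAlgebra R X →ₗ[R] IncidenceAlgebra R X)

/-- The inner part: `T u v = L(E v v) u v` off-diagonal. -/
def T : IncidenceAlgebra R X :=
  ⟨fun u v => if u = v then 0 else L (E v v) u v, fun u v h => by
    split_ifs with huv
    · rfl
    · exact IncidenceAlgebra.apply_eq_zero_of_not_le h _⟩

lemma T_apply (u v : X) : T L u v = if u = v then 0 else L (E v v) u v := rfl

/-- The transitive-map coefficient. -/
def sFun (a b : X) : R := if a = b then 0 else L (E a b) a b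

/-- The diagonal-rescaling map. -/
def Delta : IncidenceAlgebra R X →ₗ[R] IncidenceAlgebra R X where
  toFun f := ⟨fun a b => sFun L a b * f a b, fun a b h => by
    rw [IncidenceAlgebra.apply_eq_zero_of_not_le h, mul_zero]⟩
  map_add' f g := by
    ext a b _
    simp [IncidenceAlgebra.add_apply, mul_add]
  map_smul' c f := by
    ext a b _
    simp only [IncidenceAlgebra.coe_mk, IncidenceAlgebra.constSMul_apply, smul_eq_mul,
      RingHom.id_apply]
    ring

lemma Delta_apply (f : IncidenceAlgebra R X) (a b : X) : Delta L f a b = sFun L a b * f a b := rfl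

/-- The derivation candidate. -/
def Dmap : IncidenceAlgebra R X →ₗ[R] IncidenceAlgebra R X where
  toFun f := T L * f - f * T L + Delta L f
  map_add' f g := by
    rw [map_add, mul_add, add_mul]
    abel
  map_smul' c f := by
    rw [map_smul, mul_constSMul, constSMul_mul, RingHom.id_apply, smul_add, smul_sub]

lemma Dmap_apply (f : IncidenceAlgebra R X) : Dmap L f = T L * f - f * T L + Delta L f := rfl

/-- The central-map candidate. -/
def Fmap : IncidenceAlgebra R X →ₗ[R] IncidenceAlgebra R X := L - Dmap L

lemma Fmap_apply (f : IncidenceAlgebra R X) : Fmap L f = L f - Dmap L f := rfl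

end WithL

section Relations
variable {L : IncidenceAlgebra R X →ₗ[R] IncidenceAlgebra R X}
  (hL : ∀ f g : IncidenceAlgebra R X,
      L (f * g - g * f) = (L f * g - g * L f) + (f * L g - L g * f))
include hL

lemma rel1 {x y : X} (hxy : x ≠ y) : L (E x x) x y + L (E y y) x y = 0 := by
  have h := hL (E x x) (E y y)
  rw [E_mul_E_of_ne hxy, E_mul_E_of_ne hxy.symm, sub_zero, map_zero] at h
  have h2 := congr_entry h.symm x y
  simp only [IncidenceAlgebra.add_apply, IncidenceAlgebra.sub_apply, IncidenceAlgebra.zero_apply,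
    mul_E_apply, E_mul_apply] at h2
  simp only [le_refl, and_true, true_and, if_true, if_neg hxy, if_neg hxy.symm] at h2
  linear_combination h2

lemma rel2 {x u v : X} (hu : u ≠ x) (hv : v ≠ x) (huv : u ≠ v) : L (E x x) u v = 0 := by
  have h := hL (E x x) (E u u)
  rw [E_mul_E_of_ne (Ne.symm hu), E_mul_E_of_ne hu, sub_zero, map_zero] at h
  have h2 := congr_entry h.symm u v
  simp only [IncidenceAlgebra.add_apply, IncidenceAlgebra.sub_apply, IncidenceAlgebra.zero_apply,
    mul_E_apply, E_mul_apply] at h2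
  simp only [le_refl, and_true, true_and, if_true, if_neg huv, if_neg (Ne.symm huv), if_neg hu,
    if_neg hv] at h2
  linear_combination -h2

lemma rel3 {x u v : X} (huv : u ≤ v) : L (E x x) u u = L (E x x) v v := by
  rcases eq_or_ne u v with rfl | huv'
  · rfl
  rcases eq_or_ne x u with rfl | hxu
  · -- x = u
    have h := hL (E x x) (E x v)
    rw [E_mul_E_of_le le_rfl huv, E_mul_E_of_ne (Ne.symm huv')] at h
    rw [sub_zero] at h
    have h2 := congr_entry h x v
    simp only [IncidenceAlgebra.add_apply, IncidenceAlgebra.sub_apply, IncidenceAlgebra.zero_apply,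
      mul_E_apply, E_mul_apply] at h2
    simp only [le_refl, and_true, true_and, if_true, huv, if_neg huv', if_neg (Ne.symm huv')] at h2
    linear_combination -h2
  rcases eq_or_ne x v with rfl | hxv
  · -- x = v
    have h := hL (E u x) (E x x)
    rw [E_mul_E_of_le huv le_rfl, E_mul_E_of_ne hxu] at h
    rw [sub_zero] at h
    have h2 := congr_entry h u x
    simp only [IncidenceAlgebra.add_apply, IncidenceAlgebra.sub_apply, IncidenceAlgebra.zero_apply,
      mul_E_apply, E_mul_apply] at h2
    simp only [le_refl, and_true, true_and, if_true, huv, if_neg huv', if_neg hxu,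
      if_neg (Ne.symm hxu)] at h2
    linear_combination h2
  · have h := hL (E x x) (E u v)
    rw [E_mul_E_of_ne hxu, E_mul_E_of_ne (Ne.symm hxv), sub_zero, map_zero] at h
    have h2 := congr_entry h.symm u v
    simp only [IncidenceAlgebra.add_apply, IncidenceAlgebra.sub_apply, IncidenceAlgebra.zero_apply,
      mul_E_apply, E_mul_apply] at h2
    simp only [le_refl, and_true, true_and, if_true, huv, if_neg (Ne.symm hxu),
      if_neg (Ne.symm hxv)] at h2
    linear_combination h2

lemma relB1 {x y z : X} (hxy : x ≤ y) (hyz : y ≤ z) (h1 : x ≠ y) (h2 : y ≠ z) (h3 : x ≠ z) :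
    L (E x z) x z = L (E x y) x y + L (E y z) y z := by
  have h := hL (E x y) (E y z)
  rw [E_mul_E_of_le hxy hyz, E_mul_E_of_ne (Ne.symm h3)] at h
  rw [sub_zero] at h
  have h2' := congr_entry h x z
  simp only [IncidenceAlgebra.add_apply, IncidenceAlgebra.sub_apply, IncidenceAlgebra.zero_apply,
    mul_E_apply, E_mul_apply] at h2'
  simp only [le_refl, and_true, true_and, if_true, hxy, hyz, if_neg h1, if_neg (Ne.symm h1),
    if_neg h2, if_neg (Ne.symm h2)] at h2'
  linear_combination h2'

lemma relB2 (htf : ∀ r : R, r + r = 0 → r = 0) {x y : X} (hxy : x ≤ y) (hyx : y ≤ x)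
    (hne : x ≠ y) : L (E x y) x y + L (E y x) y x = 0 := by
  have h := hL (E x y) (E y x)
  rw [E_mul_E_of_le hxy hyx, E_mul_E_of_le hyx hxy, map_sub] at h
  have hxx := congr_entry h x x
  have hyy := congr_entry h y y
  simp only [IncidenceAlgebra.add_apply, IncidenceAlgebra.sub_apply, IncidenceAlgebra.zero_apply,
    mul_E_apply, E_mul_apply] at hxx hyy
  simp only [le_refl, and_true, true_and, if_true, hxy, hyx, if_neg hne, if_neg (Ne.symm hne)]
    at hxx hyy
  have e1 : L (E x x) x x = L (E x x) y y := rel3 hL hxy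
  have e2 : L (E y y) x x = L (E y y) y y := rel3 hL hxy
  apply htf
  linear_combination -hxx + hyy + e1 - e2

lemma relC1 {x y u : X} (hxy : x ≤ y) (hnxy : x ≠ y) (hu : u ≠ x) :
    L (E x y) u y = L (E x x) u x := by
  have h := hL (E x x) (E x y)
  rw [E_mul_E_of_le le_rfl hxy, E_mul_E_of_ne (Ne.symm hnxy), sub_zero] at h
  have h2 := congr_entry h u y
  simp only [IncidenceAlgebra.add_apply, IncidenceAlgebra.sub_apply, IncidenceAlgebra.zero_apply,
    mul_E_apply, E_mul_apply] at h2
  simp only [le_refl, and_true, true_and, if_true, hxy, if_neg hu, if_neg hnxy,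
    if_neg (Ne.symm hnxy)] at h2
  linear_combination h2

lemma relC2 {x y v : X} (hxy : x ≤ y) (hnxy : x ≠ y) (hv : v ≠ y) :
    L (E x y) x v = L (E y y) y v := by
  have h := hL (E x y) (E y y)
  rw [E_mul_E_of_le hxy le_rfl, E_mul_E_of_ne (Ne.symm hnxy), sub_zero] at h
  have h2 := congr_entry h x v
  simp only [IncidenceAlgebra.add_apply, IncidenceAlgebra.sub_apply, IncidenceAlgebra.zero_apply,
    mul_E_apply, E_mul_apply] at h2
  simp only [le_refl, and_true, true_and, if_true, hxy, if_neg hv, if_neg hnxy,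
    if_neg (Ne.symm hnxy)] at h2
  linear_combination h2

lemma relC3 {x y u v : X} (hxy : x ≤ y) (hnxy : x ≠ y) (hu : u ≠ x) (hvy : v ≠ y) (hvx : v ≠ x) :
    L (E x y) u v = 0 := by
  have h := hL (E x x) (E x y)
  rw [E_mul_E_of_le le_rfl hxy, E_mul_E_of_ne (Ne.symm hnxy), sub_zero] at h
  have h2 := congr_entry h u v
  simp only [IncidenceAlgebra.add_apply, IncidenceAlgebra.sub_apply, IncidenceAlgebra.zero_apply,
    mul_E_apply, E_mul_apply] at h2
  simp only [le_refl, and_true, true_and, if_true, hxy, if_neg hu, if_neg hvy, if_neg hvx] at h2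
  linear_combination h2

lemma relC4 (htf : ∀ r : R, r + r = 0 → r = 0) {x y u : X} (hxy : x ≤ y) (hnxy : x ≠ y)
    (hu : u ≠ x) : L (E x y) u x = 0 := by
  have h := hL (E x x) (E x y)
  rw [E_mul_E_of_le le_rfl hxy, E_mul_E_of_ne (Ne.symm hnxy), sub_zero] at h
  have h2 := congr_entry h u x
  simp only [IncidenceAlgebra.add_apply, IncidenceAlgebra.sub_apply, IncidenceAlgebra.zero_apply,
    mul_E_apply, E_mul_apply] at h2
  simp only [le_refl, and_true, true_and, if_true, hxy, if_neg hu, if_neg hnxy] at h2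
  apply htf
  linear_combination h2

lemma cocycle (htf : ∀ r : R, r + r = 0 → r = 0) {a c b : X} (hac : a ≤ c) (hcb : c ≤ b) :
    sFun L a b = sFun L a c + sFun L c b := by
  rcases eq_or_ne a c with rfl | h1
  · simp [sFun]
  rcases eq_or_ne c b with rfl | h2
  · simp [sFun]
  rcases eq_or_ne a b with rfl | h3
  · have hb2 := relB2 hL htf hac hcb h1
    simp only [sFun, if_pos rfl, ite_true, if_true, if_neg h1, if_neg h2]
    linear_combination -hb2
  · simp only [sFun, if_neg h1, if_neg h2, if_neg h3]
    exact relB1 hL hac hcb h1 h2 h3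

lemma Delta_leibniz (htf : ∀ r : R, r + r = 0 → r = 0) (f g : IncidenceAlgebra R X) :
    Delta L (f * g) = Delta L f * g + f * Delta L g := by
  ext a b _
  rw [IncidenceAlgebra.add_apply, Delta_apply, IncidenceAlgebra.mul_apply,
    IncidenceAlgebra.mul_apply, IncidenceAlgebra.mul_apply, Finset.mul_sum,
    ← Finset.sum_add_distrib]
  refine Finset.sum_congr rfl fun c hc => ?_
  obtain ⟨hac, hcb⟩ := Finset.mem_Icc.mp hc
  rw [Delta_apply, Delta_apply, cocycle hL htf hac hcb]
  ring

lemma Dmap_leibniz (htf : ∀ r : R, r + r = 0 → r = 0) (f g : IncidenceAlgebra R X) :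
    Dmap L (f * g) = Dmap L f * g + f * Dmap L g := by
  rw [Dmap_apply, Dmap_apply, Dmap_apply, Delta_leibniz hL htf f g]
  noncomm_ring

end Relations

/-- The submodule of diagonal elements constant on `≤`-components: these are central. -/
def Ksub : Submodule R (IncidenceAlgebra R X) where
  carrier := {h | (∀ u v, u ≠ v → h u v = 0) ∧ ∀ u v, u ≤ v → h u u = h v v}
  add_mem' := fun {a b} ha hb => ⟨fun u v huv => by
      rw [IncidenceAlgebra.add_apply, ha.1 u v huv, hb.1 u v huv, add_zero],
    fun u v huv => by
      rw [IncidenceAlgebra.add_apply, IncidenceAlgebra.add_apply, ha.2 u v huv, hb.2 u v huv]⟩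
  zero_mem' := ⟨fun _ _ _ => rfl, fun _ _ _ => rfl⟩
  smul_mem' := fun c a ha => ⟨fun u v huv => by
      rw [IncidenceAlgebra.constSMul_apply, ha.1 u v huv, smul_zero],
    fun u v huv => by
      rw [IncidenceAlgebra.constSMul_apply, IncidenceAlgebra.constSMul_apply, ha.2 u v huv]⟩

lemma central_of_mem_Ksub {h : IncidenceAlgebra R X} (hh : h ∈ Ksub (R := R) (X := X)) :
    h ∈ Set.center (IncidenceAlgebra R X) := by
  rw [Semigroup.mem_center_iff]
  intro g
  ext a b hab
  rw [IncidenceAlgebra.mul_apply, IncidenceAlgebra.mul_apply,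
    Finset.sum_eq_single_of_mem b (Finset.mem_Icc.2 ⟨hab, le_rfl⟩)
      (fun c _ hc => by rw [hh.1 c b hc, mul_zero]),
    Finset.sum_eq_single_of_mem a (Finset.mem_Icc.2 ⟨le_rfl, hab⟩)
      (fun c _ hc => by rw [hh.1 a c (Ne.symm hc), zero_mul]),
    hh.2 a b hab]
  ring

section FmapFacts
variable {L : IncidenceAlgebra R X →ₗ[R] IncidenceAlgebra R X}
  (hL : ∀ f g : IncidenceAlgebra R X,
      L (f * g - g * f) = (L f * g - g * L f) + (f * L g - L g * f))
  (htf : ∀ r : R, r + r = 0 → r = 0)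

lemma Fmap_entry (f : IncidenceAlgebra R X) (u v : X) :
    Fmap L f u v = L f u v - ((T L * f) u v - (f * T L) u v + sFun L u v * f u v) := by
  rw [Fmap_apply, IncidenceAlgebra.sub_apply, Dmap_apply, IncidenceAlgebra.add_apply,
    IncidenceAlgebra.sub_apply, Delta_apply]

include hL htf

lemma Fmap_E_offdiag {x y : X} (hxy : x ≤ y) (hne : x ≠ y) : Fmap L (E x y) = 0 := by
  ext u v _
  rw [IncidenceAlgebra.zero_apply, Fmap_entry, mul_E_apply, E_mul_apply, E_apply]
  by_cases hu : u = x
  · rw [hu]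
    by_cases hv : v = y
    · rw [hv, if_pos (show y = y ∧ x ≤ y from ⟨rfl, hxy⟩),
        if_pos (show x = x ∧ x ≤ y from ⟨rfl, hxy⟩),
        if_pos (show x = x ∧ y = y ∧ x ≤ y from ⟨rfl, rfl, hxy⟩),
        T_apply, if_pos rfl, T_apply, if_pos rfl, sFun, if_neg hne, mul_one]
      ring
    · rw [if_neg (fun h : v = y ∧ x ≤ y => hv h.1),
        if_pos (show x = x ∧ x ≤ y from ⟨rfl, hxy⟩),
        if_neg (fun h : x = x ∧ v = y ∧ x ≤ y => hv h.2.1), mul_zero,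
        relC2 hL hxy hne hv, T_apply, if_neg (fun h : y = v => hv h.symm)]
      linear_combination rel1 hL (fun h : y = v => hv h.symm)
  · by_cases hv : v = y
    · rw [hv, if_pos (show y = y ∧ x ≤ y from ⟨rfl, hxy⟩),
        if_neg (fun h : u = x ∧ x ≤ y => hu h.1),
        if_neg (fun h : u = x ∧ y = y ∧ x ≤ y => hu h.1), mul_zero,
        relC1 hL hxy hne hu, T_apply, if_neg hu]
      ring
    · rw [if_neg (fun h : v = y ∧ x ≤ y => hv h.1),
        if_neg (fun h : u = x ∧ x ≤ y => hu h.1),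
        if_neg (fun h : u = x ∧ v = y ∧ x ≤ y => hu h.1), mul_zero]
      rcases eq_or_ne v x with rfl | hvx
      · rw [relC4 hL htf hxy hne hu]
        ring
      · rw [relC3 hL hxy hne hu hv hvx]
        ring

lemma Fmap_E_diag_mem (x : X) : Fmap L (E x x) ∈ Ksub (R := R) (X := X) := by
  constructor
  · intro u v huv
    rw [Fmap_entry, mul_E_apply, E_mul_apply, E_apply,
      if_neg (fun h : u = x ∧ v = x ∧ x ≤ x => huv (h.1.trans h.2.1.symm)), mul_zero]
    by_cases hvx : v = x
    · have hux : u ≠ x := fun h => huv (h.trans hvx.symm)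
      rw [hvx, if_pos (show x = x ∧ x ≤ x from ⟨rfl, le_rfl⟩),
        if_neg (fun h : u = x ∧ x ≤ x => hux h.1),
        T_apply, if_neg hux]
      ring
    · by_cases hux : u = x
      · rw [hux, if_neg (fun h : v = x ∧ x ≤ x => hvx h.1),
          if_pos (show x = x ∧ x ≤ x from ⟨rfl, le_rfl⟩),
          T_apply, if_neg (fun h : x = v => hvx h.symm)]
        linear_combination rel1 hL (fun h : x = v => hvx h.symm)
      · rw [if_neg (fun h : v = x ∧ x ≤ x => hvx h.1),
          if_neg (fun h : u = x ∧ x ≤ x => hux h.1),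
          rel2 hL hux hvx huv]
        ring
  · intro u v huv
    have hw : ∀ w : X, Fmap L (E x x) w w = L (E x x) w w := by
      intro w
      rw [Fmap_entry, mul_E_apply, E_mul_apply, E_apply, sFun, if_pos rfl, zero_mul]
      by_cases hwx : w = x
      · rw [hwx, if_pos (show x = x ∧ x ≤ x from ⟨rfl, le_rfl⟩)]
        ring
      · rw [if_neg (fun h : w = x ∧ x ≤ x => hwx h.1),
          if_neg (fun h : w = x ∧ x ≤ x => hwx h.1)]
        ring
    rw [hw u, hw v, rel3 hL huv]

lemma Fmap_mem_Ksub (f : IncidenceAlgebra R X) : Fmap L f ∈ Ksub (R := R) (X := X) := by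
  rw [show f = ∑ x : X, ∑ y : X, f x y • E x y from decomp f, map_sum]
  refine Submodule.sum_mem _ fun x _ => ?_
  rw [map_sum]
  refine Submodule.sum_mem _ fun y _ => ?_
  rw [map_smul]
  refine Submodule.smul_mem _ _ ?_
  by_cases hxy : x ≤ y
  · rcases eq_or_ne x y with rfl | hne
    · exact Fmap_E_diag_mem hL htf x
    · rw [Fmap_E_offdiag hL htf hxy hne]
      exact Submodule.zero_mem _
  · rw [E_eq_zero_of_not_le hxy, map_zero]
    exact Submodule.zero_mem _

lemma Fmap_central (f : IncidenceAlgebra R X) :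
    Fmap L f ∈ Set.center (IncidenceAlgebra R X) :=
  central_of_mem_Ksub (Fmap_mem_Ksub hL htf f)

lemma Fmap_comm_vanish (f g : IncidenceAlgebra R X) : Fmap L (f * g - g * f) = 0 := by
  have hcf : g * Fmap L f = Fmap L f * g :=
    Semigroup.mem_center_iff.mp (Fmap_central hL htf f) g
  have hcg : f * Fmap L g = Fmap L g * f :=
    Semigroup.mem_center_iff.mp (Fmap_central hL htf g) f
  have hLf : L f = Dmap L f + Fmap L f := by rw [Fmap_apply]; abel
  have hLg : L g = Dmap L g + Fmap L g := by rw [Fmap_apply]; abel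
  rw [Fmap_apply, hL, map_sub, Dmap_leibniz hL htf f g, Dmap_leibniz hL htf g f, hLf, hLg]
  simp only [add_mul, mul_add]
  rw [hcf, hcg]
  abel

end FmapFacts

end LieDerIncidence

/-- Every Lie derivation `L` of the incidence algebra `I(X,R)` of a finite preordered set `X`
over a 2-torsion free commutative ring `R` with identity is proper: `L = D + F` where `D` is
a derivation of `I(X,R)` and `F` is an `R`-linear map from `I(X,R)` into its center that
vanishes on all commutators. -/
theorem lieDer_proper_finite {R X : Type*} [CommRing R] [Preorder X]
    [Fintype X] [DecidableEq X] [LocallyFiniteOrder X]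
    (htf : ∀ r : R, r + r = 0 → r = 0)
    (L : IncidenceAlgebra R X →ₗ[R] IncidenceAlgebra R X)
    (hL : ∀ f g : IncidenceAlgebra R X,
      L (f * g - g * f) = (L f * g - g * L f) + (f * L g - L g * f)) :
    ∃ D F : IncidenceAlgebra R X →ₗ[R] IncidenceAlgebra R X,
      (∀ f g : IncidenceAlgebra R X, D (f * g) = D f * g + f * D g) ∧
      (∀ f : IncidenceAlgebra R X, F f ∈ Set.center (IncidenceAlgebra R X)) ∧
      (∀ f g : IncidenceAlgebra R X, F (f * g - g * f) = 0) ∧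
      L = D + F := by
  refine ⟨LieDerIncidence.Dmap L, LieDerIncidence.Fmap L,
    fun f g => LieDerIncidence.Dmap_leibniz hL htf f g,
    fun f => LieDerIncidence.Fmap_central hL htf f,
    fun f g => LieDerIncidence.Fmap_comm_vanish hL htf f g, ?_⟩
  have : LieDerIncidence.Fmap L = L - LieDerIncidence.Dmap L := rfl
  rw [this]
  abel
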